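/- A monomial order (a well-order compatible with the semigroup operation and with 0 as least element) exists on the semigroup algebra K[S] if and only if the affine semigroup S is pointed, i.e., s + t ≠ 0 for all nonzero s, t ∈ S. -/

import Mathlib

theorem exists_monomial_order_iff_pointed {n : ℕ}
    (S : AddSubmonoid (Fin n → ℤ)) (hfg : S.FG) :
    (∃ r : S → S → Prop, IsWellOrder S r ∧ (∀ s : S, s ≠ 0 → r 0 s) ∧
        (∀ s t u : S, r s t → r (s + u) (t + u))) ↔
      (∀ s t : S, s ≠ 0 → t ≠ 0 → s + t ≠ 0) := by
  constructor
  · rintro ⟨r, hwo, h0, hadd⟩ s t hs ht hst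
    have h1 : r 0 s := h0 s hs
    have h2 : r t (s + t) := by simpa using hadd 0 s t h1
    rw [hst] at h2
    have h3 : r 0 t := h0 t ht
    haveI := hwo
    exact irrefl_of r 0 (trans_of r h3 h2)
  · intro hp
    -- Zorn: maximal pointed subsemigroup containing S
    set P : Set (Set (Fin n → ℤ)) := {C | (0 : Fin n → ℤ) ∈ C ∧
      (∀ a ∈ C, ∀ b ∈ C, a + b ∈ C) ∧
      (∀ a ∈ C, ∀ b ∈ C, a + b = 0 → a = 0) ∧ (S : Set (Fin n → ℤ)) ⊆ C} with hP
    have hSP : (S : Set (Fin n → ℤ)) ∈ P := by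
      refine ⟨S.zero_mem, fun a ha b hb => S.add_mem ha hb, ?_, subset_rfl⟩
      intro a ha b hb hab
      by_contra ha0
      have hb0 : b ≠ 0 := by rintro rfl; simp at hab; exact ha0 hab
      exact hp ⟨a, ha⟩ ⟨b, hb⟩ (by simpa using ha0) (by simpa using hb0)
        (by ext; simpa using congrFun hab _)
    obtain ⟨C, hSC, hmax⟩ : ∃ C, (S : Set (Fin n → ℤ)) ⊆ C ∧ Maximal (· ∈ P) C := by
      obtain ⟨C, h1, h2⟩ := zorn_subset_nonempty P (fun c hc hchain hne => by
        obtain ⟨D, hD⟩ := hne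
        refine ⟨⋃₀ c, ⟨⟨D, hD, (hc hD).1⟩, ?_, ?_, fun x hx => ⟨D, hD, (hc hD).2.2.2 hx⟩⟩,
          fun s hs => Set.subset_sUnion_of_mem hs⟩
        · rintro a ⟨A, hA, haA⟩ b ⟨B, hB, hbB⟩
          rcases hchain.total hA hB with h | h
          · exact ⟨B, hB, (hc hB).2.1 a (h haA) b hbB⟩
          · exact ⟨A, hA, (hc hA).2.1 a haA b (h hbB)⟩
        · rintro a ⟨A, hA, haA⟩ b ⟨B, hB, hbB⟩ hab
          rcases hchain.total hA hB with h | h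
          · exact (hc hB).2.2.1 a (h haA) b hbB hab
          · exact (hc hA).2.2.1 a haA b (h hbB) hab) _ hSP
      exact ⟨C, h1, h2⟩
    obtain ⟨hC0, hCadd, hCpt, hCS⟩ := hmax.prop
    have hsmul : ∀ c ∈ C, ∀ m : ℕ, m • c ∈ C := by
      intro c hc m
      induction m with
      | zero => simpa using hC0
      | succ k ih => rw [succ_nsmul]; exact hCadd _ ih _ hc
    -- totality of C
    have hkey : ∀ g : Fin n → ℤ, g ∉ C → ∃ m : ℕ, 0 < m ∧ -(m • g) ∈ C := by
      intro g hg
      set C' : Set (Fin n → ℤ) := {x | ∃ c ∈ C, ∃ m : ℕ, x = c + m • g} with hC'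
      have hCC' : C ⊆ C' := fun c hc => ⟨c, hc, 0, by simp⟩
      have hgC' : g ∈ C' := ⟨0, hC0, 1, by simp⟩
      have hC'not : C' ∉ P := fun h => hg (hCC'.antisymm' (hmax.2 h hCC') ▸ hgC')
      -- C' fails only pointedness
      have : ¬ (∀ a ∈ C', ∀ b ∈ C', a + b = 0 → a = 0) := by
        intro hpt
        refine hC'not ⟨hCC' hC0, ?_, hpt, fun x hx => hCC' (hCS hx)⟩
        rintro a ⟨c₁, hc₁, m₁, rfl⟩ b ⟨c₂, hc₂, m₂, rfl⟩
        exact ⟨c₁ + c₂, hCadd _ hc₁ _ hc₂, m₁ + m₂, by rw [add_smul]; ring⟩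
      push_neg at this
      obtain ⟨a, ⟨c₁, hc₁, m₁, rfl⟩, b, ⟨c₂, hc₂, m₂, rfl⟩, hab, hane⟩ := this
      rcases Nat.eq_zero_or_pos (m₁ + m₂) with hm | hm
      · obtain ⟨h1, h2⟩ := Nat.add_eq_zero.mp hm
        subst h1; subst h2
        simp only [zero_smul, add_zero] at hab hane
        exact absurd (hCpt _ hc₁ _ hc₂ hab) hane
      · refine ⟨m₁ + m₂, hm, ?_⟩
        have : -((m₁ + m₂) • g) = c₁ + c₂ := by
          rw [add_smul]
          have := hab
          linear_combination (norm := module) -this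
        rw [this]
        exact hCadd _ hc₁ _ hc₂
    have htotal : ∀ g : Fin n → ℤ, g ∈ C ∨ -g ∈ C := by
      intro g
      by_contra h
      push_neg at h
      obtain ⟨hg, hng⟩ := h
      obtain ⟨m, hm, hmg⟩ := hkey g hg
      obtain ⟨m', hm', hmg'⟩ := hkey (-g) hng
      have h1 : m' • (-(m • g)) ∈ C := hsmul _ hmg m'
      have h2 : m • (-(m' • -g)) ∈ C := hsmul _ hmg' m
      have h3 : m' • (-(m • g)) + m • (-(m' • -g)) = 0 := by
        simp only [smul_neg, neg_neg]
        rw [smul_comm m m' g]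
        exact neg_add_cancel _
      have h4 := hCpt _ h1 _ h2 h3
      have h5 : m' • m • g = 0 := by rwa [smul_neg, neg_eq_zero] at h4
      have h6 : ((m' * m : ℕ) : ℤ) • g = 0 := by
        rw [Nat.cast_smul_eq_nsmul, mul_smul]; exact h5
      have h7 : g = 0 := by
        rcases smul_eq_zero.mp h6 with h | h
        · exact absurd h (by positivity)
        · exact h
      exact hg (h7 ▸ hC0)
    -- the order
    refine ⟨fun s t => ((t : Fin n → ℤ) - s ∈ C ∧ s ≠ t), ?_, ?_, ?_⟩
    · -- IsWellOrder
      haveI htri : IsTrichotomous S (fun s t => ((t : Fin n → ℤ) - s ∈ C ∧ s ≠ t)) := by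
        constructor
        intro s t
        suffices H : ((t : Fin n → ℤ) - s ∈ C ∧ s ≠ t) ∨ s = t ∨ ((s : Fin n → ℤ) - t ∈ C ∧ t ≠ s) by
          exact fun h1 h2 => H.elim (fun h => absurd h h1) (fun h => h.elim id (fun h => absurd h h2))
        rcases eq_or_ne s t with h | h
        · exact Or.inr (Or.inl h)
        · rcases htotal ((t : Fin n → ℤ) - s) with hc | hc
          · exact Or.inl ⟨hc, h⟩
          · exact Or.inr (Or.inr ⟨by simpa using hc, h.symm⟩)
      haveI htr : IsTrans S (fun s t => ((t : Fin n → ℤ) - s ∈ C ∧ s ≠ t)) := by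
        constructor
        rintro s t u ⟨h1, hne1⟩ ⟨h2, hne2⟩
        have h3 : (u : Fin n → ℤ) - s ∈ C := by
          have := hCadd _ h2 _ h1
          simpa using this
        refine ⟨h3, ?_⟩
        rintro rfl
        have : ((t : Fin n → ℤ) - s) + ((s : Fin n → ℤ) - t) = 0 := by ring
        have := hCpt _ h1 _ (by simpa using h2) this
        exact hne1 (Subtype.ext (by
          have := sub_eq_zero.mp this
          exact this.symm))
      haveI hirr : IsIrrefl S (fun s t => ((t : Fin n → ℤ) - s ∈ C ∧ s ≠ t)) :=
        ⟨fun s h => h.2 rfl⟩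
      haveI hso : IsStrictOrder S (fun s t => ((t : Fin n → ℤ) - s ∈ C ∧ s ≠ t)) :=
        { toIrrefl := hirr, toIsTrans := htr }
      haveI hwf : IsWellFounded S (fun s t => ((t : Fin n → ℤ) - s ∈ C ∧ s ≠ t)) := by
        constructor
        rw [RelEmbedding.wellFounded_iff_isEmpty]
        by_contra hde
        rw [not_isEmpty_iff] at hde
        obtain ⟨f⟩ := hde
        -- generators
        obtain ⟨G, hG⟩ := hfg
        set φ : (↑(G : Set (Fin n → ℤ)) → ℕ) → (Fin n → ℤ) :=
          fun c => ∑ i : ↑(G : Set (Fin n → ℤ)), c i • (i : Fin n → ℤ) with hφ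
        have hφadd : ∀ c d, φ (c + d) = φ c + φ d := fun c d => by
          simp only [hφ, Pi.add_apply, add_smul, Finset.sum_add_distrib]
        have hrep : ∀ x ∈ S, ∃ c, φ c = x := by
          intro x hx
          rw [← hG] at hx
          induction hx using AddSubmonoid.closure_induction with
          | mem y hy =>
            refine ⟨fun i => if i = ⟨y, hy⟩ then 1 else 0, ?_⟩
            simp only [hφ, ite_smul, one_smul, zero_smul]
            rw [Finset.sum_ite_eq' Finset.univ (⟨y, hy⟩ : ↑(G : Set (Fin n → ℤ)))]
            simp
          | zero =>
            refine ⟨0, ?_⟩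
            simp only [hφ]
            exact Finset.sum_eq_zero fun i _ => zero_smul ℕ _
          | add y z _ _ hy hz =>
            obtain ⟨cy, hcy⟩ := hy
            obtain ⟨cz, hcz⟩ := hz
            exact ⟨cy + cz, by rw [hφadd, hcy, hcz]⟩
        have hφmem : ∀ c, φ c ∈ S := by
          intro c
          rw [← hG]
          exact AddSubmonoid.sum_mem _ fun i _ =>
            AddSubmonoid.nsmul_mem _ (AddSubmonoid.subset_closure i.2) _
        choose a ha using fun k => hrep (f k : Fin n → ℤ) (f k).2
        have hPWO : (Set.univ : Set (↑(G : Set (Fin n → ℤ)) → ℕ)).IsPWO := by haveI := Set.Finite.to_subtype G.finite_toSet; exact Set.isPWO_of_wellQuasiOrderedLE _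
        obtain ⟨m, k, hmk, hle⟩ := hPWO.exists_lt (f := a) (fun _ => Set.mem_univ _)
        have hdesc : ((f m : Fin n → ℤ)) - (f k : Fin n → ℤ) ∈ C ∧ f k ≠ f m :=
          f.map_rel_iff.mpr hmk
        have hdiff : (f k : Fin n → ℤ) - (f m : Fin n → ℤ) = φ (a k - a m) := by
          have : a m + (a k - a m) = a k := by
            funext i
            exact Nat.add_sub_cancel' (hle i)
          have h2 : φ (a m) + φ (a k - a m) = φ (a k) := by
            rw [← hφadd, this]
          rw [ha m, ha k] at h2
          exact (eq_sub_of_add_eq' h2).symm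
        have hmem : (f k : Fin n → ℤ) - (f m : Fin n → ℤ) ∈ C := by
          rw [hdiff]; exact hCS (hφmem _)
        have h0' : ((f m : Fin n → ℤ) - f k) + ((f k : Fin n → ℤ) - f m) = 0 := by ring
        have hz := hCpt _ hdesc.1 _ hmem h0'
        exact hdesc.2 (Subtype.ext (sub_eq_zero.mp hz)).symm
      exact ⟨⟩
    · intro s hs
      refine ⟨by simpa using hCS s.2, Ne.symm hs⟩
    · rintro s t u ⟨h1, h2⟩
      refine ⟨by simpa using h1, fun h => h2 ?_⟩
      have h3 : (s : Fin n → ℤ) + u = t + u := congrArg Subtype.val h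
      exact Subtype.ext (add_right_cancel h3)
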